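/- arXiv:1002.1324 — 4 statements merged into one kernel-verified Lean document; each statement's English description precedes it below -/
import Mathlib

section
/- Let k be a field, A a finite-dimensional k-algebra, P a finitely generated projective left A-module, and P' a further finitely generated projective left A-module; set X := P ⊕ P'. Then the canonical ring homomorphism from (End_A(P))^op to the endomorphism ring of Hom_A(P, X) as a left module over End_A(X), given by precomposition (b acting by f ↦ f ∘ b), is bijective. (Here End_A(X) acts on Hom_A(P, X) by postcomposition.) In other words, B := (End_A(P))^op satisfies the double centralizer property B ≅ End_{End_A(X)}(Hom_A(P, X)). -/
/-- Let `k` be a field, `A` a finite-dimensional `k`-algebra, `P`, `P'`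
finitely generated projective left `A`-modules and `X := P ⊕ P'`.  Then the canonical
ring homomorphism `(End_A P)ᵒᵖ → End_{End_A X}(Hom_A(P, X))`, sending `b` to the map
`f ↦ f ∘ b` (precomposition), is bijective; here `End_A X` acts on `Hom_A(P, X)` by
postcomposition.  This is the double centralizer property
`B = (End_A P)ᵒᵖ ≅ End_{End_A X}(Hom_A(P, X))`. -/
theorem double_centralizer_for_direct_summand
    (k : Type) [Field k] (A : Type) [Ring A] [Algebra k A] [FiniteDimensional k A]
    (P P' : Type)
    [AddCommGroup P] [Module A P] [Module.Finite A P] [Module.Projective A P]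
    [AddCommGroup P'] [Module A P'] [Module.Finite A P'] [Module.Projective A P'] :
    Function.Bijective (fun b : (Module.End A P)ᵐᵒᵖ =>
      ({ toFun := fun f : P →ₗ[A] (P × P') => f ∘ₗ b.unop
         map_add' := fun f g => LinearMap.add_comp _ _ _
         map_smul' := fun c f => rfl } :
        Module.End (Module.End A (P × P')) (P →ₗ[A] (P × P')))) := by
  constructor
  · intro b₁ b₂ h
    have h1 : (LinearMap.inl A P P') ∘ₗ b₁.unop = (LinearMap.inl A P P') ∘ₗ b₂.unop := by
      exact congrArg (fun Φ => Φ.toFun (LinearMap.inl A P P')) h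
    have h2 : b₁.unop = b₂.unop := by
      ext x
      have := congrArg (fun g => (g x).1) h1
      simpa using this
    exact MulOpposite.unop_injective h2
  · intro Φ
    refine ⟨MulOpposite.op ((LinearMap.fst A P P') ∘ₗ Φ (LinearMap.inl A P P')), ?_⟩
    refine LinearMap.ext fun f => ?_
    refine LinearMap.ext fun x => ?_
    show (f ∘ₗ ((LinearMap.fst A P P') ∘ₗ Φ (LinearMap.inl A P P'))) x = (Φ f) x
    have key : f = ((f ∘ₗ LinearMap.fst A P P') : Module.End A (P × P')) •
        (LinearMap.inl A P P') := by
      ext y <;> rfl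
    calc (f ∘ₗ ((LinearMap.fst A P P') ∘ₗ Φ (LinearMap.inl A P P'))) x
        = ((f ∘ₗ LinearMap.fst A P P' : Module.End A (P × P')) • Φ (LinearMap.inl A P P')) x := rfl
      _ = (Φ ((f ∘ₗ LinearMap.fst A P P' : Module.End A (P × P')) • LinearMap.inl A P P')) x := by
          rw [Φ.map_smul]
      _ = (Φ f) x := by rw [← key]
end

section
/- Let k be a field, A a finite-dimensional k-algebra, P a finitely generated projective left A-module, B := (End_A P)^op, and F := Hom_A(P, −). Assume condition (A1): for all finitely generated projective A-modules M, N, the map Hom_A(M, N) → Hom_B(F(M), F(N)) induced by F is bijective. Then the center Z(A) of A is isomorphic as a k-algebra to the center Z(B) of B; in particular, the primitive central idempotents (blocks) of A are in bijection with those of B. -/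
noncomputable section

/-- a primitive central idempotent (block idempotent) -/
def IsBlockIdempotent (R : Type) [Ring R] (e : R) : Prop :=
  e ≠ 0 ∧ IsIdempotentElem e ∧ e ∈ Subring.center R ∧
    ∀ f g : R, IsIdempotentElem f → IsIdempotentElem g →
      f ∈ Subring.center R → g ∈ Subring.center R →
      f * g = 0 → e = f + g → f = 0 ∨ g = 0

section Cover

variable (A : Type) [Ring A] (P : Type) [AddCommGroup P] [Module A P]

/-- the module structure on `F(M) = Hom_A(P, M)` over `B = (End_A P)ᵒᵖ`, by precomposition -/
instance endOppModule (M : Type) [AddCommGroup M] [Module A M] :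
    Module (Module.End A P)ᵐᵒᵖ (P →ₗ[A] M) where
  smul b f := f ∘ₗ b.unop
  one_smul f := LinearMap.comp_id f
  mul_smul _ _ _ := rfl
  smul_zero _ := LinearMap.zero_comp _
  smul_add _ _ _ := LinearMap.add_comp _ _ _
  add_smul _ _ _ := LinearMap.comp_add _ _ _
  zero_smul f := LinearMap.comp_zero f

/-- The `B`-module homomorphism `F(M) → F(N)` induced by an `A`-module homomorphism
`φ : M → N`, namely postcomposition with `φ`. -/
def inducedHom {M N : Type} [AddCommGroup M] [Module A M] [AddCommGroup N] [Module A N]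
    (φ : M →ₗ[A] N) : (P →ₗ[A] M) →ₗ[(Module.End A P)ᵐᵒᵖ] (P →ₗ[A] N) where
  toFun f := φ ∘ₗ f
  map_add' f g := LinearMap.comp_add _ _ _
  map_smul' _ _ := rfl

/-- Condition (A1): `F = Hom_A(P, -)` is fully faithful on finitely generated
projective `A`-modules. -/
def CondA1 : Prop :=
  ∀ (M : Type) [AddCommGroup M] [Module A M] [Module.Finite A M] [Module.Projective A M]
    (N : Type) [AddCommGroup N] [Module A N] [Module.Finite A N] [Module.Projective A N],
    Function.Bijective (fun φ : M →ₗ[A] N => inducedHom A P φ)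

end Cover

/-! ### Auxiliary lemmas -/

/-- Separation: a projective module is separated by its linear functionals into the ring. -/
theorem sep_proj {A P : Type} [Ring A] [AddCommGroup P] [Module A P]
    [Module.Projective A P] {q : P} (h : ∀ f : P →ₗ[A] A, f q = 0) : q = 0 := by
  obtain ⟨s, hs⟩ := Module.projective_def.mp ‹Module.Projective A P›
  have hsq : s q = 0 := by
    ext p
    exact h ((Finsupp.lapply p).comp s)
  have h2 := hs q
  rw [hsq] at h2
  simpa using h2.symm

/-- A ring isomorphism of centers transports block idempotents. -/
theorem isBlockIdempotent_map {R S : Type} [Ring R] [Ring S]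
    (ψ : Subring.center R ≃+* Subring.center S)
    {e : R} (hc : e ∈ Subring.center R) (h : IsBlockIdempotent R e) :
    IsBlockIdempotent S (ψ ⟨e, hc⟩ : Subring.center S) := by
  obtain ⟨hne, hid, -, hprim⟩ := h
  refine ⟨?_, ?_, (ψ ⟨e, hc⟩).2, ?_⟩
  · intro h0
    apply hne
    have : ψ ⟨e, hc⟩ = 0 := Subtype.ext h0
    have := ψ.injective (this.trans (map_zero ψ).symm)
    exact congrArg Subtype.val this
  · have : ψ ⟨e, hc⟩ * ψ ⟨e, hc⟩ = ψ ⟨e, hc⟩ := by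
      rw [← map_mul]
      congr 1
      exact Subtype.ext hid
    exact congrArg Subtype.val this
  · intro f g hf hg hfc hgc hfg hsum
    set F := ψ.symm ⟨f, hfc⟩ with hF
    set G := ψ.symm ⟨g, hgc⟩ with hG
    have hFG : F * G = 0 := by
      rw [hF, hG, ← map_mul]
      have : (⟨f, hfc⟩ : Subring.center S) * ⟨g, hgc⟩ = 0 := Subtype.ext hfg
      rw [this, map_zero]
    have hsum' : (⟨e, hc⟩ : Subring.center R) = F + G := by
      rw [hF, hG, ← map_add]
      apply ψ.injective
      rw [ψ.apply_symm_apply]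
      exact Subtype.ext hsum
    have hFid : IsIdempotentElem (F : R) := by
      have : F * F = F := by
        rw [hF, ← map_mul]
        congr 1
        exact Subtype.ext hf
      exact congrArg Subtype.val this
    have hGid : IsIdempotentElem (G : R) := by
      have : G * G = G := by
        rw [hG, ← map_mul]
        congr 1
        exact Subtype.ext hg
      exact congrArg Subtype.val this
    have := hprim (F : R) (G : R) hFid hGid F.2 G.2
      (congrArg Subtype.val hFG) (congrArg Subtype.val hsum')
    rcases this with h0 | h0
    · left
      have hF0 : F = 0 := Subtype.ext (by simpa using h0)
      have : (⟨f, hfc⟩ : Subring.center S) = 0 := by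
        rw [← ψ.apply_symm_apply ⟨f, hfc⟩, ← hF, hF0, map_zero]
      simpa using congrArg Subtype.val this
    · right
      have hG0 : G = 0 := Subtype.ext (by simpa using h0)
      have : (⟨g, hgc⟩ : Subring.center S) = 0 := by
        rw [← ψ.apply_symm_apply ⟨g, hgc⟩, ← hG, hG0, map_zero]
      simpa using congrArg Subtype.val this

/-- A ring isomorphism of centers gives a bijection on block idempotents. -/
def blockEquivOfCenterEquiv {R S : Type} [Ring R] [Ring S]
    (ψ : Subring.center R ≃+* Subring.center S) :
    {e : R // IsBlockIdempotent R e} ≃ {e : S // IsBlockIdempotent S e} where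
  toFun e := ⟨(ψ ⟨e.1, e.2.2.2.1⟩ : Subring.center S),
    isBlockIdempotent_map ψ e.2.2.2.1 e.2⟩
  invFun e := ⟨(ψ.symm ⟨e.1, e.2.2.2.1⟩ : Subring.center R),
    isBlockIdempotent_map ψ.symm e.2.2.2.1 e.2⟩
  left_inv e := by
    apply Subtype.ext
    simp only [Subtype.coe_eta, RingEquiv.symm_apply_apply]
  right_inv e := by
    apply Subtype.ext
    simp only [Subtype.coe_eta, RingEquiv.apply_symm_apply]

section Main

variable (k : Type) [Field k] (A : Type) [Ring A] [Algebra k A]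
  (P : Type) [AddCommGroup P] [Module A P] [Module.Projective A P] [Module.Finite A P]
  [Module k P] [IsScalarTower k A P] [SMulCommClass A k P]

/-- Multiplication by a central element, as an `A`-endomorphism of `P`. -/
def lam (z : Subalgebra.center k A) : Module.End A P where
  toFun p := z.1 • p
  map_add' := smul_add _
  map_smul' a p := by
    simp only [RingHom.id_apply, smul_smul]
    rw [Subalgebra.mem_center_iff.mp z.2 a]

@[simp] theorem lam_apply (z : Subalgebra.center k A) (p : P) : lam k A P z p = z.1 • p := rfl

/-- Right multiplication, as a morphism of left modules. -/
def rmul (z : A) : A →ₗ[A] A where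
  toFun a := a * z
  map_add' a b := add_mul a b z
  map_smul' a b := by simp [smul_eq_mul, mul_assoc]

/-- The central map `Z(A) → Z(B)`. -/
def Phi : Subalgebra.center k A →ₐ[k] Subalgebra.center k ((Module.End A P)ᵐᵒᵖ) where
  toFun z := ⟨MulOpposite.op (lam k A P z), by
    rw [Subalgebra.mem_center_iff]
    intro b
    rw [← MulOpposite.op_unop b, ← MulOpposite.op_mul, ← MulOpposite.op_mul]
    congr 1
    ext p
    simp [Module.End.mul_apply, map_smul]⟩
  map_one' := by
    apply Subtype.ext
    apply congrArg MulOpposite.op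
    ext p; simp
  map_mul' z w := by
    apply Subtype.ext
    show MulOpposite.op (lam k A P (z * w)) = MulOpposite.op (lam k A P w * lam k A P z)
    congr 1
    ext p
    simp only [lam_apply, Module.End.mul_apply, smul_smul]
    congr 1
    exact Subalgebra.mem_center_iff.mp w.2 z.1
  map_zero' := by
    apply Subtype.ext
    apply congrArg MulOpposite.op
    ext p; simp
  map_add' z w := by
    apply Subtype.ext
    show MulOpposite.op (lam k A P (z + w)) = MulOpposite.op (lam k A P z + lam k A P w)
    congr 1
    ext p
    simp [add_smul]
  commutes' c := by
    apply Subtype.ext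
    show MulOpposite.op (lam k A P (algebraMap k (Subalgebra.center k A) c))
      = algebraMap k ((Module.End A P)ᵐᵒᵖ) c
    rw [show algebraMap k ((Module.End A P)ᵐᵒᵖ) c
        = MulOpposite.op (algebraMap k (Module.End A P) c) from rfl]
    congr 1
    ext p
    simp only [lam_apply, Module.algebraMap_end_apply]
    show (algebraMap k A c) • p = c • p
    rw [algebraMap_smul]

theorem Phi_bijective (hA1 : CondA1 A P) : Function.Bijective (Phi k A P) := by
  constructor
  · rw [injective_iff_map_eq_zero]
    intro z hz
    have hlam : lam k A P z = 0 := by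
      have := congrArg Subtype.val hz
      exact MulOpposite.op_injective this
    have hP : ∀ p : P, z.1 • p = 0 := fun p => congrFun (congrArg DFunLike.coe hlam) p
    -- use injectivity of (A1) on M = N = A with rmul z.1
    have hinj := (hA1 A A).1
    have h0 : inducedHom A P (rmul A z.1) = inducedHom A P 0 := by
      ext f p
      show (rmul A z.1) (f p) = (0 : A →ₗ[A] A) (f p)
      show f p * z.1 = 0
      rw [Subalgebra.mem_center_iff.mp z.2 (f p), ← smul_eq_mul, ← map_smul, hP p, map_zero]
    have := hinj h0
    apply Subtype.ext
    have := congrArg (fun φ : A →ₗ[A] A => φ 1) this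
    simpa [rmul] using this
  · rintro ⟨b, hb⟩
    set c := b.unop with hc
    -- c commutes with every A-endomorphism of P
    have hcomm : ∀ h : Module.End A P, c * h = h * c := by
      intro h
      have h1 := Subalgebra.mem_center_iff.mp hb (MulOpposite.op h)
      have h3 := congrArg MulOpposite.unop h1
      simpa [hc] using h3
    -- the B-linear endomorphism of F(A) given by precomposition with c
    have hsurj := (hA1 A A).2
    obtain ⟨φ, hφ⟩ := hsurj
      { toFun := fun f => f ∘ₗ c
        map_add' := fun f g => LinearMap.add_comp _ _ _
        map_smul' := fun b' f => by
          simp only [RingHom.id_apply]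
          show (f ∘ₗ b'.unop) ∘ₗ c = (f ∘ₗ c) ∘ₗ b'.unop
          rw [LinearMap.comp_assoc, LinearMap.comp_assoc]
          congr 1
          exact (hcomm b'.unop).symm }
    have hφf : ∀ f : P →ₗ[A] A, φ ∘ₗ f = f ∘ₗ c := by
      intro f
      exact congrFun (congrArg DFunLike.coe hφ) f
    set z := φ 1 with hz
    have hφa : ∀ a : A, φ a = a * z := by
      intro a
      conv_lhs => rw [show a = a • (1 : A) from (smul_eq_mul a (1 : A)).symm ▸ (mul_one a).symm]
      rw [map_smul, smul_eq_mul]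
    -- z is central
    have hzc : z ∈ Subalgebra.center k A := by
      rw [Subalgebra.mem_center_iff]
      intro a
      have hinj := (hA1 A A).1
      have key : inducedHom A P (φ ∘ₗ rmul A a) = inducedHom A P (rmul A a ∘ₗ φ) := by
        ext f p
        show (φ ∘ₗ (rmul A a ∘ₗ f)) p = (rmul A a ∘ₗ (φ ∘ₗ f)) p
        rw [hφf (rmul A a ∘ₗ f), hφf f]
        rfl
      have := hinj key
      have := congrArg (fun ψ : A →ₗ[A] A => ψ 1) this
      simp only [LinearMap.comp_apply] at this
      rw [show (rmul A a) (1:A) = 1 * a from rfl, one_mul, hφa a] at this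
      rw [hφa 1, one_mul] at this
      rw [show (rmul A a) z = z * a from rfl] at this
      exact this
    refine ⟨⟨z, hzc⟩, ?_⟩
    apply Subtype.ext
    show MulOpposite.op (lam k A P ⟨z, hzc⟩) = b
    rw [← MulOpposite.op_unop b, ← hc]
    congr 1
    ext p
    simp only [lam_apply]
    -- show z • p = c p using separation
    have key : ∀ f : P →ₗ[A] A, f (z • p - c p) = 0 := by
      intro f
      rw [map_sub, map_smul, smul_eq_mul]
      have h1 := congrFun (congrArg DFunLike.coe (hφf f)) p
      simp only [LinearMap.comp_apply] at h1
      rw [hφa (f p)] at h1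
      rw [← Subalgebra.mem_center_iff.mp hzc (f p), ← h1, sub_self]
    have := sep_proj key
    rw [sub_eq_zero] at this
    exact this

/-- Bridge between the subalgebra center and the subring center. -/
def centerRingEquiv (R : Type) [Ring R] [Algebra k R] :
    Subring.center R ≃+* Subalgebra.center k R where
  toFun x := ⟨x.1, Subalgebra.mem_center_iff.mpr (Subring.mem_center_iff.mp x.2)⟩
  invFun x := ⟨x.1, Subring.mem_center_iff.mpr (Subalgebra.mem_center_iff.mp x.2)⟩
  left_inv x := rfl
  right_inv x := rfl
  map_mul' x y := rfl
  map_add' x y := rfl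

end Main

/-- If `k` is a field, `A` a finite-dimensional `k`-algebra, `P` a finitely
generated projective left `A`-module, `B := (End_A P)ᵒᵖ`, `F := Hom_A(P, −)`, and
condition (A1) holds, then `Z(A) ≅ Z(B)` as `k`-algebras; in particular the primitive
central idempotents (blocks) of `A` are in bijection with those of `B`. -/
theorem center_iso_of_condA1
    (k : Type) [Field k] (A : Type) [Ring A] [Algebra k A] [FiniteDimensional k A]
    (P : Type) [AddCommGroup P] [Module A P] [Module.Finite A P] [Module.Projective A P]
    [Module k P] [IsScalarTower k A P] [SMulCommClass A k P]
    (hA1 : CondA1 A P) :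
    Nonempty ((Subalgebra.center k A) ≃ₐ[k]
        (Subalgebra.center k ((Module.End A P)ᵐᵒᵖ))) ∧
      Nonempty ({e : A // IsBlockIdempotent A e} ≃
        {e : (Module.End A P)ᵐᵒᵖ // IsBlockIdempotent _ e}) := by
  have e : (Subalgebra.center k A) ≃ₐ[k] (Subalgebra.center k ((Module.End A P)ᵐᵒᵖ)) :=
    AlgEquiv.ofBijective (Phi k A P) (Phi_bijective k A P hA1)
  refine ⟨⟨e⟩, ⟨blockEquivOfCenterEquiv ?_⟩⟩
  exact ((centerRingEquiv k A).trans e.toRingEquiv).trans (centerRingEquiv k _).symm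

end
end

section
/- Let r = p·d, fix q ∈ ℂ with q ≠ 0, ξ := exp(2π√−1/p), x_0 := 1, and nonzero x_1, …, x_{d−1} ∈ ℂ, and define the parameters Q_{c·p+m} := x_c ξ^m for 0 ≤ c ≤ d−1 and 0 ≤ m ≤ p−1. Then for all λ, μ ∈ P_{n,r} and every i ∈ ℤ: λ ∼_R μ if and only if λ[i] ∼_R μ[i], where ∼_R is the residue equivalence with respect to the parameters q, Q_0, …, Q_{r−1}. -/
noncomputable section

/-- An `r`-multipartition of `n`, encoded as a function `la : ℕ → ℕ → ℕ`, where
`la k i` is the `(i+1)`-st part of the `(k+1)`-st component `λ^{(k+1)}`: each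
component is weakly decreasing, the parts vanish from index `n` on, the components
with index `≥ r` vanish, and the total size is `n`. -/
def IsMultipartition (n r : ℕ) (la : ℕ → ℕ → ℕ) : Prop :=
  (∀ k, Antitone (la k)) ∧ (∀ k i, n ≤ i → la k i = 0) ∧
    (∀ k, r ≤ k → ∀ i, la k i = 0) ∧
    (∑ k ∈ Finset.range r, ∑ i ∈ Finset.range n, la k i) = n

/-- The index map underlying the shift `λ ↦ λ[i]`: the component with (0-based) index
`t = c·p + j` (`0 ≤ j < p`) of `λ[i]` is the component of `λ` with index
`c·p + ((j + i) mod p)`. -/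
def shiftIdx (p : ℕ) (i : ℤ) (t : ℕ) : ℕ :=
  p * (t / p) + ((((t % p : ℕ) : ℤ) + i) % (p : ℤ)).toNat

/-- `shift p i la` is `λ[i]`, cyclically shifting the `p` components within each block
of `p` consecutive components by `i`. -/
def shift (p : ℕ) (i : ℤ) (la : ℕ → ℕ → ℕ) : ℕ → ℕ → ℕ :=
  fun t => la (shiftIdx p i t)

/-- `𝔨_λ`: the minimal positive integer `m` with `λ[m] = λ`. -/
def kOf (p : ℕ) (la : ℕ → ℕ → ℕ) : ℕ :=
  sInf {m : ℕ | 0 < m ∧ shift p (m : ℤ) la = la}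

open Classical in
/-- The residue of the (0-based) cell in row `i`, column `j` of the `(k+1)`-st component,
with respect to the parameters `q` and `Q_0, …, Q_{r-1}`; it takes values in
`ℂ ⊔ (ℤ × ℂ)`. -/
def res (q : ℂ) (Q : ℕ → ℂ) (r : ℕ) (i j k : ℕ) : ℂ ⊕ (ℤ × ℂ) :=
  if q ≠ 1 ∧ Q k ≠ 0 then Sum.inl (q ^ ((j : ℤ) - (i : ℤ)) * Q k)
  else if q = 1 ∧ (∀ l < r, l ≠ k → Q l ≠ Q k) then Sum.inr ((j : ℤ) - (i : ℤ), Q k)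
  else Sum.inl (Q k)

/-- The number of cells of the diagram of `λ` whose residue is `a`.  A cell is a triple
`(k, i, j)` with `k < r`, `i < n` and `j < λ^{(k+1)}_{i+1}` (all 0-based). -/
def resCount (q : ℂ) (Q : ℕ → ℂ) (r n : ℕ) (la : ℕ → ℕ → ℕ) (a : ℂ ⊕ (ℤ × ℂ)) : ℕ :=
  Nat.card {c : ℕ × ℕ × ℕ // c.1 < r ∧ c.2.1 < n ∧ c.2.2 < la c.1 c.2.1 ∧
    res q Q r c.2.1 c.2.2 c.1 = a}

/-- The residue equivalence `λ ∼_R μ`: for every residue value the numbers of cells of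
`λ` and of `μ` with that residue agree. -/
def ResEquiv (q : ℂ) (Q : ℕ → ℂ) (r n : ℕ) (la mu : ℕ → ℕ → ℕ) : Prop :=
  ∀ a : ℂ ⊕ (ℤ × ℂ), resCount q Q r n la a = resCount q Q r n mu a

end
noncomputable def xiC (p : ℕ) : ℂ := Complex.exp (2 * Real.pi * Complex.I / p)

lemma aux_toNat_lt {p : ℕ} (hp : 0 < p) (a : ℤ) : ((a % (p : ℤ)).toNat) < p := by
  have hp' : (0:ℤ) < p := by exact_mod_cast hp
  have h1 : 0 ≤ a % (p:ℤ) := Int.emod_nonneg _ (ne_of_gt hp')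
  have h2 : a % (p:ℤ) < p := Int.emod_lt_of_pos _ hp'
  omega

lemma shiftIdx_div {p : ℕ} (hp : 0 < p) (i : ℤ) (t : ℕ) : shiftIdx p i t / p = t / p := by
  rw [shiftIdx, Nat.mul_add_div hp, Nat.div_eq_of_lt (aux_toNat_lt hp _), add_zero]

lemma shiftIdx_mod {p : ℕ} (hp : 0 < p) (i : ℤ) (t : ℕ) :
    shiftIdx p i t % p = ((((t % p : ℕ) : ℤ) + i) % (p : ℤ)).toNat := by
  rw [shiftIdx, Nat.mul_add_mod, Nat.mod_eq_of_lt (aux_toNat_lt hp _)]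

lemma shiftIdx_shiftIdx {p : ℕ} (hp : 0 < p) (i j : ℤ) (t : ℕ) :
    shiftIdx p j (shiftIdx p i t) = shiftIdx p (i + j) t := by
  have hp' : (0:ℤ) < p := by exact_mod_cast hp
  conv_lhs => rw [shiftIdx, shiftIdx_div hp, shiftIdx_mod hp]
  rw [shiftIdx]
  congr 2
  rw [Int.toNat_of_nonneg (Int.emod_nonneg _ (ne_of_gt hp')), Int.emod_add_emod, add_assoc]

lemma shiftIdx_inv {p : ℕ} (hp : 0 < p) (i : ℤ) (t : ℕ) :
    shiftIdx p (-i) (shiftIdx p i t) = t := by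
  rw [shiftIdx_shiftIdx hp, add_neg_cancel, shiftIdx]
  have : ((t % p : ℕ) : ℤ) % (p:ℤ) = ((t % p : ℕ) : ℤ) := by
    apply Int.emod_eq_of_lt (by positivity)
    exact_mod_cast Nat.mod_lt t hp
  rw [add_zero, this, Int.toNat_natCast, Nat.div_add_mod]

lemma shiftIdx_inv' {p : ℕ} (hp : 0 < p) (i : ℤ) (t : ℕ) :
    shiftIdx p i (shiftIdx p (-i) t) = t := by
  simpa using shiftIdx_inv hp (-i) t

lemma shiftIdx_injective {p : ℕ} (hp : 0 < p) (i : ℤ) {a b : ℕ}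
    (h : shiftIdx p i a = shiftIdx p i b) : a = b := by
  have := congrArg (shiftIdx p (-i)) h
  rwa [shiftIdx_inv hp, shiftIdx_inv hp] at this

lemma shiftIdx_lt {p d : ℕ} (hp : 0 < p) (i : ℤ) (t : ℕ) (ht : t < p * d) :
    shiftIdx p i t < p * d := by
  have hdiv : t / p < d :=
    (Nat.div_lt_iff_lt_mul hp).2 (lt_of_lt_of_le ht (le_of_eq (mul_comm p d)))
  have h2 := aux_toNat_lt hp (((t % p : ℕ) : ℤ) + i)
  calc shiftIdx p i t < p * (t / p) + p := by rw [shiftIdx]; omega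
    _ = p * (t / p + 1) := by ring
    _ ≤ p * d := Nat.mul_le_mul_left p hdiv

lemma xi_ne_zero (p : ℕ) : xiC p ≠ 0 := Complex.exp_ne_zero _

lemma xi_pow_p {p : ℕ} (hp : 0 < p) : xiC p ^ (p : ℕ) = 1 := by
  rw [xiC, ← Complex.exp_nat_mul]
  have hp' : (p : ℂ) ≠ 0 := Nat.cast_ne_zero.2 hp.ne'
  rw [mul_div_cancel₀ _ hp', Complex.exp_two_pi_mul_I]

lemma xi_zpow_congr {p : ℕ} (hp : 0 < p) {a b : ℤ} (h : a % (p:ℤ) = b % (p:ℤ)) :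
    xiC p ^ a = xiC p ^ b := by
  have key : ∀ a : ℤ, xiC p ^ a = xiC p ^ (a % (p:ℤ)) := by
    intro a
    conv_lhs => rw [← Int.mul_ediv_add_emod a (p:ℤ)]
    rw [zpow_add₀ (xi_ne_zero p), zpow_mul, zpow_natCast, xi_pow_p hp, one_zpow, one_mul]
  rw [key a, key b, h]

lemma Q_eq {p d r : ℕ} (hp : 0 < p) (hr : r = p * d) {x Q : ℕ → ℂ}
    (hQ : ∀ c < d, ∀ m < p, Q (c * p + m) = x c * xiC p ^ m)
    {t : ℕ} (ht : t < r) : Q t = x (t / p) * xiC p ^ (t % p) := by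
  have hdiv : t / p < d :=
    (Nat.div_lt_iff_lt_mul hp).2 (lt_of_lt_of_le (hr ▸ ht) (le_of_eq (mul_comm p d)))
  have := hQ (t / p) hdiv (t % p) (Nat.mod_lt t hp)
  rwa [mul_comm (t / p) p, Nat.div_add_mod] at this

lemma Q_ne_zero {p d r : ℕ} (hp : 0 < p) (hr : r = p * d) {x Q : ℕ → ℂ}
    (hx0 : x 0 = 1) (hx : ∀ c, 0 < c → c < d → x c ≠ 0)
    (hQ : ∀ c < d, ∀ m < p, Q (c * p + m) = x c * xiC p ^ m)
    {t : ℕ} (ht : t < r) : Q t ≠ 0 := by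
  rw [Q_eq hp hr hQ ht]
  apply mul_ne_zero _ (pow_ne_zero _ (xi_ne_zero p))
  rcases Nat.eq_zero_or_pos (t / p) with h | h
  · rw [h, hx0]; exact one_ne_zero
  · exact hx _ h ((Nat.div_lt_iff_lt_mul hp).2
      (lt_of_lt_of_le (hr ▸ ht) (le_of_eq (mul_comm p d))))

lemma Q_shift {p d r : ℕ} (hp : 0 < p) (hr : r = p * d) {x Q : ℕ → ℂ}
    (hQ : ∀ c < d, ∀ m < p, Q (c * p + m) = x c * xiC p ^ m)
    (i : ℤ) {t : ℕ} (ht : t < r) :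
    Q (shiftIdx p i t) = xiC p ^ i * Q t := by
  have hp' : (0:ℤ) < p := by exact_mod_cast hp
  have ht' : shiftIdx p i t < r := hr ▸ shiftIdx_lt hp i t (hr ▸ ht)
  rw [Q_eq hp hr hQ ht', Q_eq hp hr hQ ht, shiftIdx_div hp, shiftIdx_mod hp]
  set s : ℤ := (((t % p : ℕ) : ℤ) + i) % (p:ℤ) with hs
  have h1 : xiC p ^ (s.toNat) = xiC p ^ (((t % p : ℕ) : ℤ) + i) := by
    rw [← zpow_natCast (xiC p) s.toNat,
      Int.toNat_of_nonneg (Int.emod_nonneg _ (ne_of_gt hp'))]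
    exact xi_zpow_congr hp (Int.emod_emod_of_dvd _ dvd_rfl)
  rw [h1, zpow_add₀ (xi_ne_zero p), zpow_natCast]
  ring

noncomputable def resMap (p : ℕ) (i : ℤ) : ℂ ⊕ (ℤ × ℂ) → ℂ ⊕ (ℤ × ℂ) :=
  Sum.map (fun z : ℂ => xiC p ^ i * z) (fun zz : ℤ × ℂ => (zz.1, xiC p ^ i * zz.2))

lemma resMap_resMap_neg (p : ℕ) (i : ℤ) (a : ℂ ⊕ (ℤ × ℂ)) :
    resMap p i (resMap p (-i) a) = a := by
  have key : ∀ z : ℂ, xiC p ^ i * (xiC p ^ (-i) * z) = z := by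
    intro z
    rw [← mul_assoc, ← zpow_add₀ (xi_ne_zero p), add_neg_cancel, zpow_zero, one_mul]
  rcases a with a | ⟨m, a⟩ <;> simp only [resMap, Sum.map_inl, Sum.map_inr] <;> rw [key]

lemma resMap_injective (p : ℕ) (i : ℤ) : Function.Injective (resMap p i) := by
  have : Function.LeftInverse (resMap p (-i)) (resMap p i) := by
    intro a; simpa using resMap_resMap_neg p (-i) a
  exact this.injective

lemma res_shift {p d r : ℕ} (hp : 0 < p) (hr : r = p * d) {x Q : ℕ → ℂ}
    (hx0 : x 0 = 1) (hx : ∀ c, 0 < c → c < d → x c ≠ 0)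
    (hQ : ∀ c < d, ∀ m < p, Q (c * p + m) = x c * xiC p ^ m)
    {q : ℂ} (i : ℤ) (i0 j0 : ℕ) {k : ℕ} (hk : k < r) :
    res q Q r i0 j0 (shiftIdx p i k) = resMap p i (res q Q r i0 j0 k) := by
  have hk' : shiftIdx p i k < r := hr ▸ shiftIdx_lt hp i k (hr ▸ hk)
  by_cases hq1 : q = 1
  · have hC : (∀ l < r, l ≠ shiftIdx p i k → Q l ≠ Q (shiftIdx p i k)) ↔
        (∀ l < r, l ≠ k → Q l ≠ Q k) := by
      constructor
      · intro hC l hl hlk heq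
        refine hC (shiftIdx p i l) (hr ▸ shiftIdx_lt hp i l (hr ▸ hl))
          (fun h => hlk (shiftIdx_injective hp i h)) ?_
        rw [Q_shift hp hr hQ i hl, Q_shift hp hr hQ i hk, heq]
      · intro hC l hl hlk heq
        have hl2 : shiftIdx p (-i) l < r := hr ▸ shiftIdx_lt hp (-i) l (hr ▸ hl)
        have hll : shiftIdx p i (shiftIdx p (-i) l) = l := shiftIdx_inv' hp i l
        have hne : shiftIdx p (-i) l ≠ k := fun h => hlk (by rw [← hll, h])
        apply hC (shiftIdx p (-i) l) hl2 hne
        have h2 := heq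
        rw [← hll, Q_shift hp hr hQ i hl2, Q_shift hp hr hQ i hk] at h2
        exact mul_left_cancel₀ (zpow_ne_zero _ (xi_ne_zero p)) h2
    rw [res, res]
    simp only [hq1, ne_eq, not_true_eq_false, false_and, if_false, true_and]
    by_cases hC2 : ∀ l < r, l ≠ k → Q l ≠ Q k
    · rw [if_pos (hC.2 hC2), if_pos hC2]
      simp [resMap, Q_shift hp hr hQ i hk]
    · rw [if_neg (fun h => hC2 (hC.1 h)), if_neg hC2]
      simp [resMap, Q_shift hp hr hQ i hk]
  · rw [res, res, if_pos ⟨hq1, Q_ne_zero hp hr hx0 hx hQ hk'⟩,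
      if_pos ⟨hq1, Q_ne_zero hp hr hx0 hx hQ hk⟩]
    simp only [resMap, Sum.map_inl, Sum.inl.injEq]
    rw [Q_shift hp hr hQ i hk]
    ring

lemma resCount_shift {p d r : ℕ} (hp : 0 < p) (hr : r = p * d) {x Q : ℕ → ℂ}
    (hx0 : x 0 = 1) (hx : ∀ c, 0 < c → c < d → x c ≠ 0)
    (hQ : ∀ c < d, ∀ m < p, Q (c * p + m) = x c * xiC p ^ m)
    {q : ℂ} (n : ℕ) (i : ℤ) (la : ℕ → ℕ → ℕ) (a : ℂ ⊕ (ℤ × ℂ)) :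
    resCount q Q r n (shift p i la) a = resCount q Q r n la (resMap p i a) := by
  apply Nat.card_congr
  refine Equiv.subtypeEquiv (Equiv.prodCongr
    (⟨shiftIdx p i, shiftIdx p (-i), fun t => shiftIdx_inv hp i t,
      fun t => shiftIdx_inv' hp i t⟩ : ℕ ≃ ℕ) (Equiv.refl (ℕ × ℕ))) ?_
  rintro ⟨k, i0, j0⟩
  simp only [Equiv.prodCongr_apply, Equiv.coe_fn_mk, Equiv.refl_apply, Prod.map, id_eq, shift]
  constructor
  · rintro ⟨hk, hn, hj, hres⟩
    refine ⟨hr ▸ shiftIdx_lt hp i k (hr ▸ hk), hn, hj, ?_⟩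
    rw [res_shift hp hr hx0 hx hQ i i0 j0 hk, hres]
  · rintro ⟨hk', hn, hj, hres⟩
    have hk : k < r := by
      have h2 := shiftIdx_lt hp (-i) (shiftIdx p i k) (hr ▸ hk')
      rwa [shiftIdx_inv hp, ← hr] at h2
    refine ⟨hk, hn, hj, resMap_injective p i ?_⟩
    rw [← res_shift hp hr hx0 hx hQ i i0 j0 hk]
    exact hres

/-- with the parameters `q ≠ 0` and `Q_{c·p+m} = x_c ξ^m`
(`ξ = exp(2π√-1/p)`, `x_0 = 1`, `x_1, …, x_{d-1} ≠ 0`), the residue equivalence is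
stable under simultaneous shifts: `λ ∼_R μ` iff `λ[i] ∼_R μ[i]` for every `i ∈ ℤ`. -/
theorem resEquiv_iff_shift_resEquiv
    (n r p d : ℕ) (hp : 0 < p) (hd : 0 < d) (hr : r = p * d)
    (q : ℂ) (hq : q ≠ 0)
    (x : ℕ → ℂ) (hx0 : x 0 = 1) (hx : ∀ c, 0 < c → c < d → x c ≠ 0)
    (Q : ℕ → ℂ)
    (hQ : ∀ c < d, ∀ m < p,
      Q (c * p + m) = x c * Complex.exp (2 * Real.pi * Complex.I / p) ^ m)
    (la mu : ℕ → ℕ → ℕ)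
    (hla : IsMultipartition n r la) (hmu : IsMultipartition n r mu) (i : ℤ) :
    ResEquiv q Q r n la mu ↔ ResEquiv q Q r n (shift p i la) (shift p i mu) := by
  have hQ' : ∀ c < d, ∀ m < p, Q (c * p + m) = x c * xiC p ^ m := hQ
  constructor
  · intro h a
    rw [resCount_shift hp hr hx0 hx hQ' n i la a,
      resCount_shift hp hr hx0 hx hQ' n i mu a]
    exact h _
  · intro h b
    calc resCount q Q r n la b
        = resCount q Q r n la (resMap p i (resMap p (-i) b)) := by
          rw [resMap_resMap_neg]
      _ = resCount q Q r n (shift p i la) (resMap p (-i) b) :=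
          (resCount_shift hp hr hx0 hx hQ' n i la _).symm
      _ = resCount q Q r n (shift p i mu) (resMap p (-i) b) := h _
      _ = resCount q Q r n mu b := by
          rw [resCount_shift hp hr hx0 hx hQ' n i mu _, resMap_resMap_neg]
end

section
/- Let r = p·d with p, d ≥ 1. Let λ, μ ∈ P_{n,r} with λ ≠ μ, and suppose there are indices i, j ∈ {1,…,r} such that λ^{(l)} = μ^{(l)} for every l ∉ {i, j}, and such that if i ≠ j and λ^{(i)} = λ^{(j)} then μ^{(i)} ≠ μ^{(j)}. If 𝔨_λ divides 𝔨_μ, then 𝔨_μ = p. -/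
section Helpers

variable {p : ℕ}

private lemma shiftIdx_add (hp : 0 < p) (a b : ℤ) (t : ℕ) :
    shiftIdx p b (shiftIdx p a t) = shiftIdx p (a + b) t := by
  have hpz : ((p : ℤ)) ≠ 0 := by exact_mod_cast hp.ne'
  have hppos : (0 : ℤ) < p := by exact_mod_cast hp
  set x : ℤ := ((t % p : ℕ) : ℤ) with hx
  have hu0 : (0:ℤ) ≤ (x + a) % p := Int.emod_nonneg _ hpz
  have hult : (x + a) % p < p := Int.emod_lt_of_pos _ hppos
  set u : ℕ := ((x + a) % p).toNat with hu
  have hcast : (u : ℤ) = (x + a) % p := Int.toNat_of_nonneg hu0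
  have hup : u < p := by
    have := hult; rw [← hcast] at this; exact_mod_cast this
  have h1 : shiftIdx p a t = p * (t / p) + u := rfl
  have hdiv : (p * (t / p) + u) / p = t / p := by
    rw [Nat.mul_add_div hp, Nat.div_eq_of_lt hup, Nat.add_zero]
  have hmod : (p * (t / p) + u) % p = u := by
    rw [Nat.mul_add_mod, Nat.mod_eq_of_lt hup]
  have h2 : shiftIdx p b (p * (t / p) + u) = p * (t / p) + (((u : ℤ) + b) % p).toNat := by
    unfold shiftIdx
    rw [hdiv, hmod]
  rw [h1, h2, hcast]
  unfold shiftIdx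
  congr 1
  rw [Int.emod_add_emod, add_assoc]

private lemma shift_shift (hp : 0 < p) (a b : ℤ) (la : ℕ → ℕ → ℕ) :
    shift p b (shift p a la) = shift p (b + a) la := by
  funext t
  show la (shiftIdx p a (shiftIdx p b t)) = la (shiftIdx p (b + a) t)
  rw [shiftIdx_add hp]

private lemma shiftIdx_zero (hp : 0 < p) (t : ℕ) : shiftIdx p 0 t = t := by
  have hlt : ((t % p : ℕ) : ℤ) % p = ((t % p : ℕ) : ℤ) := by
    apply Int.emod_eq_of_lt (by positivity)
    exact_mod_cast Nat.mod_lt t hp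
  unfold shiftIdx
  rw [add_zero, hlt, Int.toNat_natCast, Nat.div_add_mod]

private lemma shiftIdx_p (hp : 0 < p) (t : ℕ) : shiftIdx p (p : ℤ) t = t := by
  have hlt : (((t % p : ℕ) : ℤ) + p) % p = ((t % p : ℕ) : ℤ) := by
    rw [show ((t % p : ℕ) : ℤ) + p = ((t % p : ℕ) : ℤ) + p * 1 by ring, Int.add_mul_emod_self_left]
    apply Int.emod_eq_of_lt (by positivity)
    exact_mod_cast Nat.mod_lt t hp
  unfold shiftIdx
  rw [hlt, Int.toNat_natCast, Nat.div_add_mod]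

private lemma shift_p (hp : 0 < p) (la : ℕ → ℕ → ℕ) : shift p (p : ℤ) la = la := by
  funext t
  show la (shiftIdx p (p : ℤ) t) = la t
  rw [shiftIdx_p hp]

private lemma shift_mul (hp : 0 < p) {k : ℕ} {la : ℕ → ℕ → ℕ}
    (h : shift p (k : ℤ) la = la) (m : ℕ) : shift p ((m * k : ℕ) : ℤ) la = la := by
  induction m with
  | zero =>
      funext t
      show la (shiftIdx p _ t) = la t
      norm_num
      rw [shiftIdx_zero hp]
  | succ m ih =>
      have : (((m + 1) * k : ℕ) : ℤ) = (k : ℤ) + ((m * k : ℕ) : ℤ) := by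
        push_cast; ring
      rw [this, ← shift_shift hp, ih, h]

end Helpers

/-- let `λ ≠ μ` be `r`-multipartitions of `n` (`r = p·d`) which differ in
at most two components `i, j`, such that moreover `μ^{(i)} ≠ μ^{(j)}` whenever `i ≠ j`
and `λ^{(i)} = λ^{(j)}`.  If `𝔨_λ ∣ 𝔨_μ` then `𝔨_μ = p`. -/
theorem kOf_eq_p_of_dvd
    (n r p d : ℕ) (hp : 0 < p) (hd : 0 < d) (hr : r = p * d)
    (la mu : ℕ → ℕ → ℕ)
    (hla : IsMultipartition n r la) (hmu : IsMultipartition n r mu)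
    (hne : la ≠ mu)
    (i j : ℕ) (hi : i < r) (hj : j < r)
    (heq : ∀ l, l ≠ i → l ≠ j → la l = mu l)
    (hcond : i ≠ j → la i = la j → mu i ≠ mu j)
    (hdvd : kOf p la ∣ kOf p mu) :
    kOf p mu = p := by
  -- basic facts about the sets involved
  have hpmem : ∀ nu : ℕ → ℕ → ℕ, p ∈ {m : ℕ | 0 < m ∧ shift p (m : ℤ) nu = nu} :=
    fun nu => ⟨hp, shift_p hp nu⟩
  have hmem : ∀ nu : ℕ → ℕ → ℕ, 0 < kOf p nu ∧ shift p ((kOf p nu : ℕ) : ℤ) nu = nu :=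
    fun nu => Nat.sInf_mem ⟨p, hpmem nu⟩
  set k := kOf p mu with hk
  have hkp : k ≤ p := Nat.sInf_le (hpmem mu)
  have hk0 : 0 < k := (hmem mu).1
  have hmufix : shift p (k : ℤ) mu = mu := (hmem mu).2
  -- λ is also fixed by the shift by k, since 𝔨_λ ∣ k
  have hlafix : shift p (k : ℤ) la = la := by
    obtain ⟨c, hc⟩ := hdvd
    rw [hc, mul_comm]
    exact shift_mul hp (hmem la).2 c
  -- it suffices to rule out k < p
  rcases eq_or_lt_of_le hkp with h | hklt
  · exact h
  exfalso
  set σ : ℕ → ℕ := shiftIdx p (k : ℤ) with hσ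
  have hlaσ : ∀ t, la (σ t) = la t := fun t => congrFun hlafix t
  have hmuσ : ∀ t, mu (σ t) = mu t := fun t => congrFun hmufix t
  -- σ has no fixed points since 0 < k < p
  have hnfix : ∀ t, σ t ≠ t := by
    intro t ht
    have hxlt : ((t % p : ℕ) : ℤ) < p := by exact_mod_cast Nat.mod_lt t hp
    have hx0 : (0 : ℤ) ≤ ((t % p : ℕ) : ℤ) := by positivity
    have h1 : p * (t / p) + ((((t % p : ℕ) : ℤ) + k) % p).toNat = t := ht
    have hdm := Nat.div_add_mod t p
    have h2 : ((((t % p : ℕ) : ℤ) + k) % p).toNat = t % p :=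
      Nat.add_left_cancel (h1.trans hdm.symm)
    have h3 : (((t % p : ℕ) : ℤ) + k) % p = ((t % p : ℕ) : ℤ) := by
      have hnn : (0:ℤ) ≤ (((t % p : ℕ) : ℤ) + k) % p :=
        Int.emod_nonneg _ (by exact_mod_cast hp.ne')
      rw [← Int.toNat_of_nonneg hnn, h2]
    have h4 : ((t % p : ℕ) : ℤ) % p = ((t % p : ℕ) : ℤ) := Int.emod_eq_of_lt hx0 hxlt
    have h5 : (p : ℤ) ∣ ((((t % p : ℕ) : ℤ) + k) - ((t % p : ℕ) : ℤ)) := by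
      rw [Int.dvd_iff_emod_eq_zero, Int.sub_emod, h3, h4, sub_self, Int.zero_emod]
    have h6 : (p : ℤ) ∣ (k : ℤ) := by simpa using h5
    have : p ∣ k := by exact_mod_cast h6
    exact absurd (Nat.le_of_dvd hk0 this) (not_le.mpr hklt)
  -- key steps
  have key1 : σ i ≠ j → la i = mu i := by
    intro h
    have h' := heq (σ i) (hnfix i) h
    rw [← hlaσ i, h', hmuσ i]
  have key2 : σ j ≠ i → la j = mu j := by
    intro h
    have h' := heq (σ j) h (hnfix j)
    rw [← hlaσ j, h', hmuσ j]
  have main : la i = mu i ∧ la j = mu j := by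
    by_cases h1 : σ i = j
    · by_cases h2 : σ j = i
      · -- swap case: contradiction with hcond
        exfalso
        have hij : i ≠ j := fun h => hnfix i (h ▸ h1)
        have hlaij : la i = la j := by rw [← hlaσ i, h1]
        have hmuij : mu i = mu j := by rw [← hmuσ i, h1]
        exact hcond hij hlaij hmuij
      · -- σ i = j, σ j ∉ {i, j}
        have hj' : la j = mu j := key2 h2
        have hli : la i = la j := by rw [← hlaσ i, h1]
        have hmi : mu i = mu j := by rw [← hmuσ i, h1]
        exact ⟨by rw [hli, hj', ← hmi], hj'⟩
    · by_cases h2 : σ j = i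
      · -- σ j = i, σ i ∉ {i, j}
        have hi' : la i = mu i := key1 h1
        have hlj : la j = la i := by rw [← hlaσ j, h2]
        have hmj : mu j = mu i := by rw [← hmuσ j, h2]
        exact ⟨hi', by rw [hlj, hi', ← hmj]⟩
      · exact ⟨key1 h1, key2 h2⟩
  apply hne
  funext l
  by_cases hli : l = i
  · rw [hli]; exact main.1
  by_cases hlj : l = j
  · rw [hlj]; exact main.2
  exact heq l hli hlj
end
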